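/- Let f : ℝ → ℝ, let a > 0, let f̂(x) = a·f(x/a²), let h ≤ m ≤ h' be real numbers and let b > 0. Then the (ab)-neighborhood of a²m with respect to f̂ relative to the interval [a²h, a²h'] equals a² times the b-neighborhood of m with respect to f relative to [h, h']; that is, 𝔩_{f̂}(a²m, ab) = a²·𝔩_f(m, b) and 𝔯_{f̂}(a²m, ab) = a²·𝔯_f(m, b). -/

import Mathlib

open Real Set Pointwise

/-- `𝔩_f(m,c)` relative to the interval `[h, h']`: the infimum of the set of points of `[h, m]`
where `f` is less than `c` above `f m`. -/
noncomputable def neighL (f : ℝ → ℝ) (h m c : ℝ) : ℝ :=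
  sInf {x | x ∈ Set.Icc h m ∧ f x - f m < c}

/-- `𝔯_f(m,c)` relative to the interval `[h, h']`: the supremum of the set of points of `[m, h']`
where `f` is less than `c` above `f m`. -/
noncomputable def neighR (f : ℝ → ℝ) (m h' c : ℝ) : ℝ :=
  sSup {x | x ∈ Set.Icc m h' ∧ f x - f m < c}

/-- The rescaled function `f̂(x) = a f(x/a²)`. -/
noncomputable def rescale (f : ℝ → ℝ) (a : ℝ) : ℝ → ℝ := fun x => a * f (x / a ^ 2)

/-- Scaling of neighborhoods of well bottoms: the `(ab)`-neighborhood of `a² m` for `f̂`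
relative to `[a²h, a²h']` is `a²` times the `b`-neighborhood of `m` for `f` relative
to `[h, h']`. -/
theorem neighborhood_rescale (f : ℝ → ℝ) (a b h m h' : ℝ) (ha : 0 < a) (hb : 0 < b)
    (hhm : h ≤ m) (hmh' : m ≤ h') :
    neighL (rescale f a) (a ^ 2 * h) (a ^ 2 * m) (a * b) = a ^ 2 * neighL f h m b ∧
    neighR (rescale f a) (a ^ 2 * m) (a ^ 2 * h') (a * b) = a ^ 2 * neighR f m h' b := by
  have ha2 : (0:ℝ) < a ^ 2 := by positivity
  have hset : ∀ u v : ℝ,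
      {x | x ∈ Set.Icc (a ^ 2 * u) (a ^ 2 * v) ∧ rescale f a x - rescale f a (a ^ 2 * m) < a * b}
        = (a ^ 2) • {x | x ∈ Set.Icc u v ∧ f x - f m < b} := by
    intro u v
    ext x
    simp only [Set.mem_smul_set, Set.mem_setOf_eq, Set.mem_Icc, rescale]
    constructor
    · rintro ⟨⟨h1, h2⟩, h3⟩
      refine ⟨x / a ^ 2, ⟨⟨?_, ?_⟩, ?_⟩, by rw [smul_eq_mul]; field_simp⟩
      · rw [le_div_iff₀ ha2]; linarith [mul_comm (a^2) u]
      · rw [div_le_iff₀ ha2]; linarith [mul_comm (a^2) v]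
      · rw [mul_comm (a^2) m, mul_div_assoc, div_self (ne_of_gt ha2), mul_one] at h3
        have := (mul_lt_mul_iff_right₀ ha).mp (by linarith [mul_sub a (f (x / a^2)) (f m)] : a * (f (x / a^2) - f m) < a * b)
        linarith
    · rintro ⟨y, ⟨⟨h1, h2⟩, h3⟩, rfl⟩
      have hy : a ^ 2 * y / a ^ 2 = y := by field_simp
      refine ⟨⟨by simpa [smul_eq_mul] using (mul_le_mul_iff_right₀ ha2).mpr h1,
        by simpa [smul_eq_mul] using (mul_le_mul_iff_right₀ ha2).mpr h2⟩, ?_⟩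
      simp only [smul_eq_mul, hy, mul_div_cancel_left₀ _ (ne_of_gt ha2)]
      calc a * f y - a * f m = a * (f y - f m) := by ring
      _ < a * b := (mul_lt_mul_iff_right₀ ha).mpr h3
  constructor
  · rw [neighL, neighL, hset h m, Real.sInf_smul_of_nonneg (le_of_lt ha2)]
    rfl
  · rw [neighR, neighR, hset m h', Real.sSup_smul_of_nonneg (le_of_lt ha2)]
    rfl
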